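/- An allocation M is the outcome of some recursively balanced policy if and only if M is Pareto optimal, M is balanced, and M satisfies Condition 3. -/

import Mathlib

open Finset
open scoped Classical

/-- The most preferred item of a nonempty finset w.r.t. a linear order
(greater means more preferred). -/
noncomputable def favorite {ι : Type} (L : LinearOrder ι) (S : Finset ι) (h : S.Nonempty) : ι :=
  @Finset.max' ι L S h

/-- Sequential allocation: process the turns in order; at each turn the agent whose
turn it is picks her most preferred item among the items not yet allocated.
Returns the list of (agent, item) picks, in order. -/
noncomputable def seqAlloc {n : ℕ} {ι : Type} [DecidableEq ι]
    (P : Fin n → LinearOrder ι) : List (Fin n) → Finset ι → List (Fin n × ι)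
  | [], _ => []
  | a :: rest, S =>
    if h : S.Nonempty then
      (a, favorite (P a) S h) :: seqAlloc P rest (S.erase (favorite (P a) S h))
    else []

/-- `M` is the outcome of the policy `π`: every item is picked by the agent that
`M` assigns it to. -/
def IsOutcome {n : ℕ} {ι : Type} [Fintype ι] [DecidableEq ι]
    (P : Fin n → LinearOrder ι) (π : List (Fin n)) (M : ι → Fin n) : Prop :=
  ∀ o : ι, (M o, o) ∈ seqAlloc P π Finset.univ

/-- The set of items that agent `a` picks under the policy `π`. -/
noncomputable def receives {n : ℕ} {ι : Type} [Fintype ι] [DecidableEq ι]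
    (P : Fin n → LinearOrder ι) (π : List (Fin n)) (a : Fin n) : Finset ι :=
  Finset.univ.filter (fun o => (a, o) ∈ seqAlloc P π Finset.univ)

/-- An allocation `M` is Pareto optimal if there is no bijection `f` of the items such
that every agent weakly prefers `f o` to `o` for each item `o` she gets, with at least
one strict preference. -/
def ParetoOptimal {n : ℕ} {ι : Type} (P : Fin n → LinearOrder ι) (M : ι → Fin n) : Prop :=
  ¬ ∃ f : ι ≃ ι, (∀ o : ι, (P (M o)).le o (f o)) ∧ (∃ o : ι, (P (M o)).lt o (f o))

/-- A policy is balanced if every agent has exactly `k` turns. -/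
def BalancedPolicy {n : ℕ} (k : ℕ) (π : List (Fin n)) : Prop :=
  ∀ a : Fin n, π.count a = k

/-- An allocation is balanced if every agent receives exactly `k` items. -/
def BalancedAlloc {n : ℕ} {ι : Type} [Fintype ι] (k : ℕ) (M : ι → Fin n) : Prop :=
  ∀ a : Fin n, (Finset.univ.filter (fun o => M o = a)).card = k

/-- A policy is recursively balanced if it splits into `k` consecutive rounds of `n`
turns each, every agent having exactly one turn in each round. -/
def RecBalanced (n k : ℕ) (π : List (Fin n)) : Prop :=
  ∃ rounds : List (List (Fin n)), rounds.length = k ∧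
    (∀ r ∈ rounds, r.length = n ∧ ∀ a : Fin n, r.count a = 1) ∧
    π = rounds.flatten

/-- A strict alternation policy: every one of the `k` rounds uses the same order `σ`
over the agents. -/
def StrictAlt (n k : ℕ) (π : List (Fin n)) : Prop :=
  ∃ σ : List (Fin n), σ.length = n ∧ (∀ a : Fin n, σ.count a = 1) ∧
    π = (List.replicate k σ).flatten

/-- A balanced alternation policy: odd-numbered rounds use the order `σ` over the agents
and even-numbered rounds use its reverse. -/
def BalAlt (n k : ℕ) (π : List (Fin n)) : Prop :=
  ∃ σ : List (Fin n), σ.length = n ∧ (∀ a : Fin n, σ.count a = 1) ∧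
    π = ((List.range k).map (fun r => if r % 2 = 0 then σ else σ.reverse)).flatten

/-- `p j i` (for `1 ≤ i ≤ k`) is the item ranked `i`-th by agent `j` among the items `M`
allocates to `j`: it is allocated to `j`, and exactly `i - 1` of the items allocated
to `j` are strictly preferred to it by agent `j`. -/
def IsRankingOf {n : ℕ} {ι : Type} [Fintype ι] (P : Fin n → LinearOrder ι) (k : ℕ)
    (M : ι → Fin n) (p : Fin n → ℕ → ι) : Prop :=
  ∀ (j : Fin n) (i : ℕ), 1 ≤ i → i ≤ k →
    M (p j i) = j ∧
    (Finset.univ.filter (fun o => M o = j ∧ (P j).lt (p j i) o)).card = i - 1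

/-- Condition 3: for all `1 ≤ t < s ≤ k` and all agents `j, j'`, agent `j` strictly
prefers `p j t` to `p j' s`. -/
def Cond3 {n : ℕ} {ι : Type} (P : Fin n → LinearOrder ι) (k : ℕ) (p : Fin n → ℕ → ι) : Prop :=
  ∀ t s : ℕ, 1 ≤ t → t < s → s ≤ k → ∀ j j' : Fin n, (P j).lt (p j' s) (p j t)

/-- The edge relation of the directed graph `G_M`: for odd `i ≤ k` an edge `a → b`
whenever `b` strictly prefers `p a i` to `p b i`, and for even `i ≤ k` an edge `a → b`
whenever `a` strictly prefers `p b i` to `p a i`. -/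
def GM {n : ℕ} {ι : Type} (P : Fin n → LinearOrder ι) (k : ℕ) (p : Fin n → ℕ → ι)
    (a b : Fin n) : Prop :=
  (∃ i : ℕ, 1 ≤ i ∧ i ≤ k ∧ i % 2 = 1 ∧ (P b).lt (p b i) (p a i)) ∨
  (∃ i : ℕ, 1 ≤ i ∧ i ≤ k ∧ i % 2 = 0 ∧ (P a).lt (p a i) (p b i))

/-- The edge relation of the directed graph `H_M`: for each `i ≤ k` an edge `a → b`
whenever `b` strictly prefers `p a i` to `p b i`. -/
def HM {n : ℕ} {ι : Type} (P : Fin n → LinearOrder ι) (k : ℕ) (p : Fin n → ℕ → ι)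
    (a b : Fin n) : Prop :=
  ∃ i : ℕ, 1 ≤ i ∧ i ≤ k ∧ (P b).lt (p b i) (p a i)

/-- The `k` most preferred items of agent `j`: those items with fewer than `k` items
strictly preferred to them by `j`. -/
noncomputable def topItems {n : ℕ} {ι : Type} [Fintype ι] (P : Fin n → LinearOrder ι)
    (k : ℕ) (j : Fin n) : Finset ι :=
  Finset.univ.filter (fun o => (Finset.univ.filter (fun o' => (P j).lt o o')).card < k)

/-- The rank of item `o` in agent `j`'s preference (the most preferred item has rank 1). -/
noncomputable def rankOf {n : ℕ} {ι : Type} [Fintype ι] (P : Fin n → LinearOrder ι)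
    (j : Fin n) (o : ι) : ℕ :=
  (Finset.univ.filter (fun o' => (P j).lt o o')).card + 1
section Basic
variable {n : ℕ} {ι : Type} [DecidableEq ι] (P : Fin n → LinearOrder ι)

theorem seqAlloc_nil (S : Finset ι) : seqAlloc P [] S = [] := by simp [seqAlloc]

theorem seqAlloc_cons (a : Fin n) (rest : List (Fin n)) (S : Finset ι) (h : S.Nonempty) :
    seqAlloc P (a :: rest) S =
      (a, favorite (P a) S h) :: seqAlloc P rest (S.erase (favorite (P a) S h)) := by
  simp [seqAlloc, h]

theorem snd_mem_of_mem_seqAlloc : ∀ (π : List (Fin n)) (S : Finset ι) (x : Fin n × ι),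
    x ∈ seqAlloc P π S → x.2 ∈ S := by
  intro π
  induction π with
  | nil => intro S x hx; simp [seqAlloc] at hx
  | cons a rest ih =>
    intro S x hx
    by_cases h : S.Nonempty
    · rw [seqAlloc_cons P a rest S h] at hx
      rcases List.mem_cons.1 hx with h1 | h1
      · subst h1; exact @Finset.max'_mem ι (P a) S h
      · exact Finset.mem_of_mem_erase (ih _ _ h1)
    · simp [seqAlloc, h] at hx
set_option linter.unusedSectionVars false
theorem favorite_mem {L : LinearOrder ι} {S : Finset ι} (h : S.Nonempty) :
    favorite L S h ∈ S := @Finset.max'_mem ι L S h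

theorem le_favorite {L : LinearOrder ι} {S : Finset ι} (h : S.Nonempty) {o : ι} (ho : o ∈ S) :
    L.le o (favorite L S h) := @Finset.le_max' ι L S o ho

theorem favorite_eq {L : LinearOrder ι} {S : Finset ι} (h : S.Nonempty) {b : ι} (hb : b ∈ S)
    (hmax : ∀ o ∈ S, L.le o b) : favorite L S h = b :=
  L.le_antisymm _ _ (@Finset.max'_le ι L S h b hmax) (@Finset.le_max' ι L S b hb)

theorem seqAlloc_map_fst : ∀ (π : List (Fin n)) (S : Finset ι), π.length ≤ S.card →
    (seqAlloc P π S).map Prod.fst = π := by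
  intro π
  induction π with
  | nil => intro S _; simp [seqAlloc]
  | cons a rest ih =>
    intro S hlen
    have h : S.Nonempty := Finset.card_pos.1 (lt_of_lt_of_le (Nat.succ_pos _) hlen)
    rw [seqAlloc_cons P a rest S h, List.map_cons]
    rw [ih _ (by rw [Finset.card_erase_of_mem (favorite_mem h)]; simp only [List.length_cons] at hlen; omega)]

theorem seqAlloc_snd_nodup : ∀ (π : List (Fin n)) (S : Finset ι),
    ((seqAlloc P π S).map Prod.snd).Nodup := by
  intro π
  induction π with
  | nil => intro S; simp [seqAlloc]
  | cons a rest ih =>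
    intro S
    by_cases h : S.Nonempty
    · rw [seqAlloc_cons P a rest S h, List.map_cons]
      refine List.nodup_cons.2 ⟨?_, ih _⟩
      intro hmem
      rcases List.mem_map.1 hmem with ⟨x, hx, hx2⟩
      have := snd_mem_of_mem_seqAlloc P _ _ _ hx
      rw [hx2] at this
      exact (Finset.mem_erase.1 this).1 rfl
    · simp [seqAlloc, h]

theorem seqAlloc_snd_toFinset : ∀ (π : List (Fin n)) (S : Finset ι), S.card ≤ π.length →
    ((seqAlloc P π S).map Prod.snd).toFinset = S := by
  intro π
  induction π with
  | nil =>
    intro S hlen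
    have : S = ∅ := Finset.card_eq_zero.1 (Nat.le_zero.1 hlen)
    simp [seqAlloc, this]
  | cons a rest ih =>
    intro S hlen
    by_cases h : S.Nonempty
    · rw [seqAlloc_cons P a rest S h, List.map_cons, List.toFinset_cons,
        ih _ (by rw [Finset.card_erase_of_mem (favorite_mem h)]; simp only [List.length_cons] at hlen; omega)]
      exact Finset.insert_erase (favorite_mem h)
    · rw [Finset.not_nonempty_iff_eq_empty] at h
      simp [seqAlloc, h]

theorem seqAlloc_later_lt : ∀ (π : List (Fin n)) (S : Finset ι) (L1 L2 : List (Fin n × ι))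
    (a : Fin n) (o : ι), seqAlloc P π S = L1 ++ (a, o) :: L2 →
    ∀ x ∈ L2, (P a).lt x.2 o := by
  intro π
  induction π with
  | nil => intro S L1 L2 a o heq; simp [seqAlloc] at heq
  | cons c rest ih =>
    intro S L1 L2 a o heq x hx
    by_cases h : S.Nonempty
    · rw [seqAlloc_cons P c rest S h] at heq
      cases L1 with
      | nil =>
        rw [List.nil_append] at heq
        have h1 : (c, favorite (P c) S h) = (a, o) := (List.cons.injEq _ _ _ _ ▸ heq).1
        have h2 : seqAlloc P rest (S.erase (favorite (P c) S h)) = L2 :=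
          (List.cons.injEq _ _ _ _ ▸ heq).2
        have hca : c = a := congrArg Prod.fst h1
        have hfo : favorite (P c) S h = o := congrArg Prod.snd h1
        have hx2 : x.2 ∈ S.erase (favorite (P c) S h) :=
          snd_mem_of_mem_seqAlloc P _ _ _ (h2 ▸ hx)
        rw [Finset.mem_erase] at hx2
        have hle : (P a).le x.2 o := by
          rw [← hfo, ← hca]; exact le_favorite h hx2.2
        have hne : x.2 ≠ o := by rw [← hfo]; exact hx2.1
        exact @lt_of_le_of_ne ι (P a).toPartialOrder _ _ hle hne
      | cons y L1' =>
        simp only [List.cons_append, List.cons.injEq] at heq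
        exact ih _ _ _ _ _ heq.2 x hx
    · simp [seqAlloc, h] at heq
theorem seqAlloc_append : ∀ (π1 π2 : List (Fin n)) (S : Finset ι), π1.length ≤ S.card →
    seqAlloc P (π1 ++ π2) S =
      seqAlloc P π1 S ++ seqAlloc P π2 (S \ ((seqAlloc P π1 S).map Prod.snd).toFinset) := by
  intro π1
  induction π1 with
  | nil => intro π2 S _; simp [seqAlloc]
  | cons a rest ih =>
    intro π2 S hlen
    have h : S.Nonempty := Finset.card_pos.1 (lt_of_lt_of_le (Nat.succ_pos _) hlen)
    set o := favorite (P a) S h with ho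
    have hcard : rest.length ≤ (S.erase o).card := by
      rw [Finset.card_erase_of_mem (favorite_mem h)]
      simp only [List.length_cons] at hlen; omega
    rw [List.cons_append, seqAlloc_cons P a (rest ++ π2) S h, seqAlloc_cons P a rest S h,
      ih π2 (S.erase o) hcard]
    have hset : S.erase o \ (List.map Prod.snd (seqAlloc P rest (S.erase o))).toFinset
        = S \ insert o (List.map Prod.snd (seqAlloc P rest (S.erase o))).toFinset := by
      ext y
      simp only [Finset.mem_sdiff, Finset.mem_erase, Finset.mem_insert]
      constructor
      · rintro ⟨⟨h1, h2⟩, h3⟩; exact ⟨h2, by tauto⟩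
      · rintro ⟨h1, h2⟩; push_neg at h2; exact ⟨⟨h2.1, h1⟩, h2.2⟩
    rw [List.cons_append, List.map_cons, List.toFinset_cons, ← hset]

theorem seqAlloc_fixed (f : ι ≃ ι) :
    ∀ (π : List (Fin n)) (S : Finset ι), S.card ≤ π.length →
    (∀ a o, (a, o) ∈ seqAlloc P π S → (P a).le o (f o)) →
    (∀ o ∈ S, f o ∈ S) → ∀ o ∈ S, f o = o := by
  intro π
  induction π with
  | nil =>
    intro S hlen _ _ o ho
    have : S = ∅ := Finset.card_eq_zero.1 (Nat.le_zero.1 hlen)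
    rw [this] at ho; exact absurd ho (Finset.notMem_empty o)
  | cons a rest ih =>
    intro S hlen hle hcl o ho
    have h : S.Nonempty := ⟨o, ho⟩
    set b := favorite (P a) S h with hb
    have hfb : f b = b := by
      have h1 : (P a).le b (f b) := hle a b (by rw [seqAlloc_cons P a rest S h]; exact List.mem_cons_self)
      have h2 : (P a).le (f b) b := le_favorite h (hcl b (favorite_mem h))
      exact (P a).le_antisymm _ _ h2 h1
    by_cases hob : o = b
    · rw [hob, hfb]
    · refine ih (S.erase b) ?_ ?_ ?_ o (Finset.mem_erase.2 ⟨hob, ho⟩)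
      · rw [Finset.card_erase_of_mem (favorite_mem h)]
        simp only [List.length_cons] at hlen; omega
      · intro c o' hmem
        exact hle c o' (by rw [seqAlloc_cons P a rest S h]; exact List.mem_cons_of_mem _ hmem)
      · intro o' ho'
        rw [Finset.mem_erase] at ho'
        refine Finset.mem_erase.2 ⟨?_, hcl o' ho'.2⟩
        intro hcon
        exact ho'.1 (f.injective (by rw [hcon, hfb]))
theorem count_one_nodup {r : List (Fin n)} (hr : ∀ a : Fin n, r.count a = 1) : r.Nodup :=
  List.nodup_iff_count_le_one.2 (fun a => (hr a).le)

theorem forward_blocks [Nonempty ι] : ∀ (rs : List (List (Fin n))) (S : Finset ι),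
    (rs.flatten).length ≤ S.card → (∀ r ∈ rs, ∀ a : Fin n, r.count a = 1) →
    ∃ q : Fin n → ℕ → ι,
      (∀ j t, t < rs.length → (j, q j t) ∈ seqAlloc P rs.flatten S) ∧
      (∀ j j' t s, t < s → s < rs.length → (P j).lt (q j' s) (q j t)) ∧
      (∀ x ∈ seqAlloc P rs.flatten S, ∃ t, t < rs.length ∧ x.2 = q x.1 t) := by
  intro rs
  induction rs with
  | nil =>
    intro S _ _
    exact ⟨fun _ _ => Classical.arbitrary ι, by simp, by simp, by simp [seqAlloc]⟩
  | cons r rs ih =>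
    intro S hlen hcount
    have hrlen : r.length ≤ S.card := by
      rw [List.flatten_cons, List.length_append] at hlen; omega
    have happ := seqAlloc_append P r rs.flatten S hrlen
    set B := seqAlloc P r S with hB
    set S' := S \ (B.map Prod.snd).toFinset with hS'
    set L' := seqAlloc P rs.flatten S' with hL'
    have hfst : B.map Prod.fst = r := seqAlloc_map_fst P r S hrlen
    have hBlen : B.length = r.length := by rw [← hfst, List.length_map]
    have hnodupr : r.Nodup := count_one_nodup (hcount r (List.mem_cons_self))
    have hfstnodup : (B.map Prod.fst).Nodup := hfst ▸ hnodupr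
    have hsub : (B.map Prod.snd).toFinset ⊆ S := by
      intro y hy
      rcases List.mem_map.1 (List.mem_toFinset.1 hy) with ⟨x, hx, hx2⟩
      exact hx2 ▸ snd_mem_of_mem_seqAlloc P _ _ _ hx
    have hcardS' : rs.flatten.length ≤ S'.card := by
      rw [hS', Finset.card_sdiff_of_subset hsub, List.toFinset_card_of_nodup (seqAlloc_snd_nodup P r S),
        List.length_map, hBlen]
      rw [List.flatten_cons, List.length_append] at hlen; omega
    obtain ⟨q', hq1, hq2, hq3⟩ := ih S' hcardS' (fun r' hr' => hcount r' (List.mem_cons_of_mem _ hr'))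
    -- the pair of agent j in block B
    have hpair : ∀ j : Fin n, ∃ x ∈ B, x.1 = j := by
      intro j
      have hj : j ∈ r := by
        have := hcount r (List.mem_cons_self) j
        exact List.count_pos_iff.1 (by omega)
      rw [← hfst] at hj
      rcases List.mem_map.1 hj with ⟨x, hx, hx2⟩
      exact ⟨x, hx, hx2⟩
    choose xb hxbmem hxbfst using hpair
    have huniq : ∀ x ∈ B, x = xb x.1 := by
      intro x hx
      exact List.inj_on_of_nodup_map hfstnodup hx (hxbmem x.1) ((hxbfst x.1).symm)
    refine ⟨fun j t => if t = 0 then (xb j).2 else q' j (t - 1), ?_, ?_, ?_⟩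
    · intro j t ht
      rw [List.flatten_cons, happ, List.mem_append]
      by_cases ht0 : t = 0
      · simp only [ht0, reduceIte]
        left
        have hxj : xb j = (j, (xb j).2) := Prod.ext (hxbfst j) rfl
        rw [← hxj]
        exact hxbmem j
      · simp only [if_neg ht0]
        right
        exact hq1 j (t - 1) (by simp only [List.length_cons] at ht; omega)
    · intro j j' t s hts hs
      have hs0 : s ≠ 0 := by omega
      simp only [if_neg hs0]
      by_cases ht0 : t = 0
      · simp only [ht0, reduceIte]
        -- split B at xb j, item of round s is in L'
        rcases List.append_of_mem (hxbmem j) with ⟨X, Y, hXY⟩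
        have hsplit : seqAlloc P ((r ++ rs.flatten)) S
            = X ++ (j, (xb j).2) :: (Y ++ L') := by
          have hxj : xb j = (j, (xb j).2) := Prod.ext (hxbfst j) rfl
          rw [happ, hXY, ← hxj]
          simp [List.append_assoc]
        have hmem : ((j' : Fin n), q' j' (s-1)) ∈ Y ++ L' :=
          List.mem_append.2 (Or.inr (hq1 j' (s-1) (by simp only [List.length_cons] at hs; omega)))
        exact seqAlloc_later_lt P _ _ _ _ _ _ hsplit _ hmem
      · simp only [if_neg ht0]
        exact hq2 j j' (t-1) (s-1) (by omega) (by simp only [List.length_cons] at hs; omega)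
    · intro x hx
      rw [List.flatten_cons, happ, List.mem_append] at hx
      rcases hx with hx | hx
      · exact ⟨0, Nat.succ_pos _, by simpa using congrArg Prod.snd (huniq x hx)⟩
      · rcases hq3 x hx with ⟨t, ht, hqt⟩
        exact ⟨t + 1, by simp only [List.length_cons]; omega, by simp [hqt]⟩
theorem Plt_irrefl (L : LinearOrder ι) (x : ι) : ¬ L.lt x x :=
  @lt_irrefl ι (@PartialOrder.toPreorder ι L.toPartialOrder) x

theorem Plt_trans {L : LinearOrder ι} {x y z : ι} (h1 : L.lt x y) (h2 : L.lt y z) : L.lt x z :=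
  @lt_trans ι (@PartialOrder.toPreorder ι L.toPartialOrder) x y z h1 h2

theorem Ple_of_lt {L : LinearOrder ι} {x y : ι} (h : L.lt x y) : L.le x y :=
  @le_of_lt ι (@PartialOrder.toPreorder ι L.toPartialOrder) x y h

theorem Ple_refl (L : LinearOrder ι) (x : ι) : L.le x x :=
  @le_refl ι (@PartialOrder.toPreorder ι L.toPartialOrder) x

theorem Plt_asymm {L : LinearOrder ι} {x y : ι} (h1 : L.lt x y) (h2 : L.lt y x) : False :=
  Plt_irrefl L x (Plt_trans h1 h2)

end Basic

section Forward
variable {n k : ℕ} {ι : Type} [Fintype ι] [DecidableEq ι]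
  (P : Fin n → LinearOrder ι) (M : ι → Fin n)

theorem forward_dir (hn : 0 < n) (hk : 1 ≤ k) (hcard : Fintype.card ι = k * n)
    (π : List (Fin n)) (hrb : RecBalanced n k π) (hout : IsOutcome P π M) :
    ParetoOptimal P M ∧ BalancedAlloc k M ∧
      ∀ p : Fin n → ℕ → ι, IsRankingOf P k M p → Cond3 P k p := by
  obtain ⟨rounds, hlen, hr, hπ⟩ := hrb
  have hι : Nonempty ι := by
    rw [← Fintype.card_pos_iff, hcard]
    exact Nat.mul_pos hk hn
  have hflat : rounds.flatten.length = k * n := by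
    rw [List.length_flatten]
    have : rounds.map List.length = List.replicate k n := by
      refine List.eq_replicate_iff.2 ⟨by rw [List.length_map, hlen], ?_⟩
      intro b hb
      rcases List.mem_map.1 hb with ⟨r, hrm, hrl⟩
      rw [← hrl]; exact (hr r hrm).1
    rw [this, List.sum_replicate, smul_eq_mul]
  have hcardu : (Finset.univ : Finset ι).card = k * n := by rw [Finset.card_univ, hcard]
  subst hπ
  obtain ⟨q, hq1, hq2, hq3⟩ := forward_blocks P rounds Finset.univ
    (by rw [hflat, hcardu]) (fun r hr' => (hr r hr').2)
  rw [hlen] at hq1 hq2 hq3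
  -- ownership
  have howner : ∀ (j : Fin n) (o : ι), (j, o) ∈ seqAlloc P rounds.flatten Finset.univ → M o = j := by
    intro j o hmem
    have h1 := hout o
    have := List.inj_on_of_nodup_map (seqAlloc_snd_nodup P rounds.flatten Finset.univ) h1 hmem rfl
    exact congrArg Prod.fst this
  have hMq : ∀ j t, t < k → M (q j t) = j := fun j t ht => howner j (q j t) (hq1 j t ht)
  have hrepr : ∀ o : ι, ∃ t, t < k ∧ o = q (M o) t := by
    intro o
    rcases hq3 (M o, o) (hout o) with ⟨t, ht, hqt⟩
    exact ⟨t, ht, hqt⟩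
  have hitems : ∀ j : Fin n, Finset.univ.filter (fun o => M o = j)
      = (Finset.range k).image (q j) := by
    intro j
    ext o
    simp only [Finset.mem_filter, Finset.mem_univ, true_and, Finset.mem_image, Finset.mem_range]
    constructor
    · intro hMo
      rcases hrepr o with ⟨t, ht, hqt⟩
      exact ⟨t, ht, by rw [← hMo] at *; exact hqt.symm⟩
    · rintro ⟨t, ht, rfl⟩
      exact hMq j t ht
  have hqinj : ∀ j : Fin n, ∀ t < k, ∀ s < k, q j t = q j s → t = s := by
    intro j t ht s hs heq
    by_contra hne
    rcases Nat.lt_or_ge t s with h | h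
    · exact Plt_irrefl (P j) (q j t) (by nth_rewrite 1 [heq]; exact hq2 j j t s h hs)
    · have h' : s < t := by omega
      exact Plt_irrefl (P j) (q j s) (by nth_rewrite 1 [← heq]; exact hq2 j j s t h' ht)
  have hbal : BalancedAlloc k M := by
    intro j
    rw [hitems j, Finset.card_image_of_injOn, Finset.card_range]
    intro t ht s hs
    rw [Finset.mem_coe, Finset.mem_range] at ht hs
    exact hqinj j t ht s hs
  have hcnt : ∀ (j : Fin n) (t : ℕ), t < k →
      (Finset.univ.filter (fun o => M o = j ∧ (P j).lt (q j t) o)).card = t := by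
    intro j t ht
    have hset : Finset.univ.filter (fun o => M o = j ∧ (P j).lt (q j t) o)
        = (Finset.range t).image (q j) := by
      ext o
      simp only [Finset.mem_filter, Finset.mem_univ, true_and, Finset.mem_image, Finset.mem_range]
      constructor
      · rintro ⟨hMo, hlt⟩
        rcases hrepr o with ⟨s, hs, hqs⟩
        rw [hMo] at hqs
        refine ⟨s, ?_, hqs.symm⟩
        by_contra hst
        have hts : t ≤ s := by omega
        rcases Nat.eq_or_lt_of_le hts with h | h
        · rw [hqs, ← h] at hlt; exact Plt_irrefl (P j) _ hlt
        · rw [hqs] at hlt; exact Plt_asymm hlt (hq2 j j t s h hs)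
      · rintro ⟨s, hst, rfl⟩
        exact ⟨hMq j s (by omega), hq2 j j s t hst ht⟩
    rw [hset, Finset.card_image_of_injOn, Finset.card_range]
    intro a ha b hb
    rw [Finset.mem_coe, Finset.mem_range] at ha hb
    exact hqinj j a (by omega) b (by omega)
  have hkey : ∀ (j : Fin n) (x y : ι), M x = j → M y = j → (P j).lt x y →
      (Finset.univ.filter (fun o => M o = j ∧ (P j).lt y o)).card
        < (Finset.univ.filter (fun o => M o = j ∧ (P j).lt x o)).card := by
    intro j x y hx hy hlt
    apply Finset.card_lt_card
    rw [Finset.ssubset_iff_of_subset]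
    · exact ⟨y, Finset.mem_filter.2 ⟨Finset.mem_univ _, hy, hlt⟩,
        fun hmem => Plt_irrefl (P j) y (Finset.mem_filter.1 hmem).2.2⟩
    · intro o ho
      rw [Finset.mem_filter] at ho ⊢
      exact ⟨ho.1, ho.2.1, Plt_trans hlt ho.2.2⟩
  have huniqcnt : ∀ (j : Fin n) (x y : ι), M x = j → M y = j →
      (Finset.univ.filter (fun o => M o = j ∧ (P j).lt x o)).card
        = (Finset.univ.filter (fun o => M o = j ∧ (P j).lt y o)).card → x = y := by
    intro j x y hx hy hcard'
    rcases @lt_trichotomy ι (P j) x y with h | h | h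
    · exact absurd hcard'.symm (Nat.ne_of_lt (hkey j x y hx hy h))
    · exact h
    · exact absurd hcard' (Nat.ne_of_lt (hkey j y x hy hx h))
  refine ⟨?_, hbal, ?_⟩
  · rintro ⟨f, hle, o₀, hlt⟩
    have hfix := seqAlloc_fixed P f rounds.flatten Finset.univ
      (by rw [hflat, hcardu]) ?_ (fun o _ => Finset.mem_univ (f o)) o₀ (Finset.mem_univ o₀)
    · rw [hfix] at hlt
      exact Plt_irrefl (P (M o₀)) o₀ hlt
    · intro a o hmem
      rw [← howner a o hmem] at *
      exact hle o
  · intro p hp t s ht hts hs j j'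
    have hpq : ∀ (j : Fin n) (i : ℕ), 1 ≤ i → i ≤ k → p j i = q j (i - 1) := by
      intro j i h1 h2
      obtain ⟨hM1, hc1⟩ := hp j i h1 h2
      refine huniqcnt j (p j i) (q j (i-1)) hM1 (hMq j (i-1) (by omega)) ?_
      rw [hc1, hcnt j (i-1) (by omega)]
    rw [hpq j t (by omega) (by omega), hpq j' s (by omega) (by omega)]
    exact hq2 j j' (t-1) (s-1) (by omega) (by omega)

end Forward
section Backward
variable {n k : ℕ} {ι : Type} [Fintype ι] [DecidableEq ι]

/-- count of strictly better items among agent j's bundle -/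
noncomputable def cntB (P : Fin n → LinearOrder ι) (M : ι → Fin n) (j : Fin n) (o : ι) : ℕ :=
  (Finset.univ.filter (fun o' => M o' = j ∧ (P j).lt o o')).card

variable (P : Fin n → LinearOrder ι) (M : ι → Fin n)

theorem cntB_lt_of_lt {j : Fin n} {x y : ι} (hx : M x = j) (hy : M y = j)
    (hlt : (P j).lt x y) : cntB P M j y < cntB P M j x := by
  apply Finset.card_lt_card
  rw [Finset.ssubset_iff_of_subset]
  · exact ⟨y, Finset.mem_filter.2 ⟨Finset.mem_univ _, hy, hlt⟩,
      fun hmem => Plt_irrefl (P j) y (Finset.mem_filter.1 hmem).2.2⟩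
  · intro o ho
    rw [Finset.mem_filter] at ho ⊢
    exact ⟨ho.1, ho.2.1, Plt_trans hlt ho.2.2⟩

theorem cntB_inj {j : Fin n} {x y : ι} (hx : M x = j) (hy : M y = j)
    (h : cntB P M j x = cntB P M j y) : x = y := by
  rcases @lt_trichotomy ι (P j) x y with hl | hl | hl
  · exact absurd h.symm (Nat.ne_of_lt (cntB_lt_of_lt P M hx hy hl))
  · exact hl
  · exact absurd h (Nat.ne_of_lt (cntB_lt_of_lt P M hy hx hl))

theorem cntB_lt_k (hk : 1 ≤ k) (hbal : BalancedAlloc k M) {j : Fin n} {o : ι}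
    (ho : M o = j) : cntB P M j o < k := by
  have hsub : Finset.univ.filter (fun o' => M o' = j ∧ (P j).lt o o')
      ⊆ (Finset.univ.filter (fun o' => M o' = j)).erase o := by
    intro o' ho'
    rw [Finset.mem_filter] at ho'
    refine Finset.mem_erase.2 ⟨?_, Finset.mem_filter.2 ⟨Finset.mem_univ _, ho'.2.1⟩⟩
    intro hcon
    exact Plt_irrefl (P j) o (hcon ▸ ho'.2.2)
  have := Finset.card_le_card hsub
  have hmem : o ∈ Finset.univ.filter (fun o' => M o' = j) :=
    Finset.mem_filter.2 ⟨Finset.mem_univ _, ho⟩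
  rw [Finset.card_erase_of_mem hmem, hbal j] at this
  unfold cntB
  omega

theorem exists_ranking (hk : 1 ≤ k) (hbal : BalancedAlloc k M) (hι : Nonempty ι) :
    ∃ p : Fin n → ℕ → ι, IsRankingOf P k M p := by
  have hex : ∀ (j : Fin n) (i : ℕ), 1 ≤ i → i ≤ k → ∃ o, M o = j ∧ cntB P M j o = i - 1 := by
    intro j i h1 h2
    have hsurj := Finset.surj_on_of_inj_on_of_card_le
      (s := Finset.univ.filter (fun o => M o = j)) (t := Finset.range k)
      (fun o _ => cntB P M j o)
      (fun o ho => Finset.mem_range.2 (cntB_lt_k P M hk hbal (Finset.mem_filter.1 ho).2))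
      (fun o1 o2 h1 h2 heq => cntB_inj P M (Finset.mem_filter.1 h1).2 (Finset.mem_filter.1 h2).2 heq)
      (by rw [Finset.card_range, hbal j])
    rcases hsurj (i - 1) (Finset.mem_range.2 (by omega)) with ⟨o, ho, hco⟩
    exact ⟨o, (Finset.mem_filter.1 ho).2, hco.symm⟩
  classical
  refine ⟨fun j i => if h : ∃ o, M o = j ∧ cntB P M j o = i - 1 then h.choose else hι.some, ?_⟩
  intro j i h1 h2
  have h := hex j i h1 h2
  simp only [dif_pos h]
  exact ⟨h.choose_spec.1, h.choose_spec.2⟩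

/-- existence of a picking order within a round, from Pareto optimality -/
theorem exists_round_order (hPO : ParetoOptimal P M) (p : Fin n → ℕ → ι)
    (hpown : ∀ (j : Fin n) (i : ℕ), 1 ≤ i → i ≤ k → M (p j i) = j)
    (i : ℕ) (hi1 : 1 ≤ i) (hik : i ≤ k) :
    ∀ A : Finset (Fin n), ∃ τ : List (Fin n), τ.toFinset = A ∧
      List.Pairwise (fun j j' => (P j).lt (p j' i) (p j i)) τ := by
  -- first: in any nonempty A there is an agent preferring her own item
  have hbest : ∀ A : Finset (Fin n), A.Nonempty →
      ∃ j ∈ A, ∀ j' ∈ A, j' ≠ j → (P j).lt (p j' i) (p j i) := by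
    intro A hA
    by_contra hcon
    push_neg at hcon
    have hstep : ∀ j ∈ A, ∃ j' ∈ A, j' ≠ j ∧ (P j).lt (p j i) (p j' i) := by
      intro j hj
      rcases hcon j hj with ⟨j', hj', hne, hnlt⟩
      refine ⟨j', hj', hne, ?_⟩
      rcases @lt_trichotomy ι (P j) (p j i) (p j' i) with h | h | h
      · exact h
      · exfalso
        apply hne
        have h2 := congrArg M h
        rw [hpown j i hi1 hik, hpown j' i hi1 hik] at h2
        exact h2.symm
      · exact absurd hnlt (@not_le_of_gt ι (@PartialOrder.toPreorder ι (P j).toPartialOrder) _ _ h)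
    classical
    set g : Fin n → Fin n := fun j => if h : j ∈ A then (hstep j h).choose else j with hg
    have hgA : ∀ j ∈ A, g j ∈ A ∧ g j ≠ j ∧ (P j).lt (p j i) (p (g j) i) := by
      intro j hj
      rw [hg]
      simp only [dif_pos hj]
      obtain ⟨h1, h2, h3⟩ := (hstep j hj).choose_spec
      exact ⟨h1, h2, h3⟩
    obtain ⟨x₀, hx₀⟩ := hA
    have horbit : ∀ t : ℕ, g^[t] x₀ ∈ A := by
      intro t
      induction t with
      | zero => exact hx₀
      | succ t ih => rw [Function.iterate_succ_apply']; exact (hgA _ ih).1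
    -- find a periodic point
    obtain ⟨a, b, hab, heq⟩ := Finite.exists_ne_map_eq_of_infinite (fun t : ℕ => g^[t] x₀)
    wlog hab' : a < b generalizing a b
    · exact this b a hab.symm heq.symm (by omega)
    have hper : ∃ c : ℕ, 1 ≤ c ∧ g^[c] (g^[a] x₀) = g^[a] x₀ := by
      refine ⟨b - a, by omega, ?_⟩
      rw [← Function.iterate_add_apply]
      have : b - a + a = b := by omega
      rw [this, ← heq]
    set x := g^[a] x₀ with hx
    have hxA : x ∈ A := horbit a
    have hxorbA : ∀ t, g^[t] x ∈ A := by
      intro t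
      rw [hx, ← Function.iterate_add_apply]
      exact horbit _
    classical
    set c := Nat.find hper with hc
    obtain ⟨hc1, hcyc⟩ := Nat.find_spec hper
    have hcmin : ∀ c' : ℕ, 1 ≤ c' → c' < c → g^[c'] x ≠ x := by
      intro c' h1 h2 hcon'
      exact absurd ⟨h1, hcon'⟩ (Nat.find_min hper h2)
    -- the cycle elements are pairwise distinct
    have hdist : ∀ s t, s < t → t < c → g^[s] x ≠ g^[t] x := by
      intro s t hst htc hcon'
      have : g^[c - t + s] x = x := by
        have h1 : g^[c - t] (g^[t] x) = x := by
          rw [← Function.iterate_add_apply]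
          have : c - t + t = c := by omega
          rw [this, hcyc]
        rw [← hcon'] at h1
        rw [← Function.iterate_add_apply] at h1
        have : c - t + s = s + (c - t) := by omega
        rw [this]
        rw [Nat.add_comm s (c - t)] at this ⊢
        exact h1
      exact hcmin (c - t + s) (by omega) (by omega) this
    -- form the improving cycle of items
    set l : List ι := (List.range c).map (fun t => p (g^[t] x) i) with hl
    have hllen : l.length = c := by rw [hl, List.length_map, List.length_range]
    have hlget : ∀ (t : ℕ) (ht : t < l.length), l[t] = p (g^[t] x) i := by
      intro t ht
      simp only [hl, List.getElem_map, List.getElem_range]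
    have hlnodup : l.Nodup := by
      rw [hl]
      refine List.Nodup.map_on ?_ List.nodup_range
      intro s hs t ht heq'
      by_contra hne
      have howner := congrArg M heq'
      rw [hpown _ i hi1 hik, hpown _ i hi1 hik] at howner
      rw [List.mem_range] at hs ht
      rcases Nat.lt_or_ge s t with h | h
      · exact hdist s t h ht howner
      · exact hdist t s (by omega) hs howner.symm
    set f := l.formPerm with hf
    apply hPO
    refine ⟨f, ?_, ?_⟩
    · intro o
      by_cases ho : o ∈ l
      · rcases List.mem_iff_getElem.1 ho with ⟨t, ht, hot⟩
        have happly := List.formPerm_apply_getElem l hlnodup t ht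
        rw [hot] at happly
        have hnext : l[(t + 1) % l.length]'(Nat.mod_lt _ (by omega)) =
            p (g^[(t + 1) % l.length] x) i := hlget _ _
        have hgstep : g^[(t + 1) % l.length] x = g (g^[t] x) := by
          rw [hllen] at *
          by_cases hlast : t + 1 = c
          · rw [hlast, Nat.mod_self]
            have : g (g^[t] x) = g^[c] x := by
              rw [← hlast, Function.iterate_succ_apply']
            rw [this, hcyc]
            simp
          · rw [Nat.mod_eq_of_lt (by omega), Function.iterate_succ_apply']
        have hoform : o = p (g^[t] x) i := by rw [← hot, hlget t ht]
        have hMo : M o = g^[t] x := by rw [hoform]; exact hpown _ i hi1 hik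
        rw [← hf] at happly
        rw [happly, hnext, hgstep, hMo, hoform]
        exact Ple_of_lt ((hgA _ (hxorbA t)).2.2)
      · rw [hf, List.formPerm_apply_of_notMem ho]
        exact Ple_refl _ _
    · refine ⟨p x i, ?_⟩
      have hxmem : p x i ∈ l := by
        rw [hl]
        refine List.mem_map.2 ⟨0, List.mem_range.2 (by omega), by simp⟩
      rcases List.mem_iff_getElem.1 hxmem with ⟨t, ht, hot⟩
      have happly := List.formPerm_apply_getElem l hlnodup t ht
      rw [hot] at happly
      have hnext : l[(t + 1) % l.length]'(Nat.mod_lt _ (by omega)) =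
          p (g^[(t + 1) % l.length] x) i := hlget _ _
      have hgstep : g^[(t + 1) % l.length] x = g (g^[t] x) := by
        rw [hllen] at *
        by_cases hlast : t + 1 = c
        · rw [hlast, Nat.mod_self]
          have : g (g^[t] x) = g^[c] x := by
            rw [← hlast, Function.iterate_succ_apply']
          rw [this, hcyc]
          simp
        · rw [Nat.mod_eq_of_lt (by omega), Function.iterate_succ_apply']
      have hoform : p x i = p (g^[t] x) i := by rw [← hot, hlget t ht]
      have hMo : M (p x i) = g^[t] x := by rw [hoform]; exact hpown _ i hi1 hik
      rw [← hf] at happly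
      rw [happly, hnext, hgstep, hMo]
      nth_rewrite 1 [hoform]
      exact (hgA _ (hxorbA t)).2.2
  -- now build the list by induction on A.card
  have key : ∀ (c : ℕ) (B : Finset (Fin n)), B.card ≤ c → ∃ τ : List (Fin n),
      τ.toFinset = B ∧ List.Pairwise (fun j j' => (P j).lt (p j' i) (p j i)) τ := by
    intro c
    induction c with
    | zero =>
      intro B hB
      have : B = ∅ := Finset.card_eq_zero.1 (Nat.le_zero.1 hB)
      subst this
      exact ⟨[], by simp, List.Pairwise.nil⟩
    | succ c ihc =>
      intro B hB
      rcases Finset.eq_empty_or_nonempty B with rfl | hne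
      · exact ⟨[], by simp, List.Pairwise.nil⟩
      · obtain ⟨j, hj, hjb⟩ := hbest B hne
        obtain ⟨τ', hτ'fin, hτ'pw⟩ := ihc (B.erase j)
          (by rw [Finset.card_erase_of_mem hj]; have := Finset.card_pos.2 hne; omega)
        refine ⟨j :: τ', ?_, ?_⟩
        · rw [List.toFinset_cons, hτ'fin, Finset.insert_erase hj]
        · refine List.Pairwise.cons ?_ hτ'pw
          intro j' hj'
          have : j' ∈ B.erase j := hτ'fin ▸ List.mem_toFinset.2 hj'
          rw [Finset.mem_erase] at this
          exact hjb j' this.2 this.1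
  exact fun A => key A.card A le_rfl
theorem backward_dir (hn : 0 < n) (hk : 1 ≤ k) (hcard : Fintype.card ι = k * n)
    (hPO : ParetoOptimal P M) (hbal : BalancedAlloc k M)
    (hC3 : ∀ p : Fin n → ℕ → ι, IsRankingOf P k M p → Cond3 P k p) :
    ∃ π : List (Fin n), RecBalanced n k π ∧ IsOutcome P π M := by
  have hι : Nonempty ι := by
    rw [← Fintype.card_pos_iff, hcard]
    exact Nat.mul_pos hk hn
  obtain ⟨p, hprank⟩ := exists_ranking P M hk hbal hι
  have hc3 := hC3 p hprank
  have hpown : ∀ (j : Fin n) (i : ℕ), 1 ≤ i → i ≤ k → M (p j i) = j :=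
    fun j i h1 h2 => (hprank j i h1 h2).1
  have hpcnt : ∀ (j : Fin n) (i : ℕ), 1 ≤ i → i ≤ k → cntB P M j (p j i) = i - 1 :=
    fun j i h1 h2 => (hprank j i h1 h2).2
  set rnkB : ι → ℕ := fun o => cntB P M (M o) o + 1 with hrnkB
  have hrnk1 : ∀ o : ι, 1 ≤ rnkB o := fun o => Nat.le_add_left 1 _
  have hrnkk : ∀ o : ι, rnkB o ≤ k := by
    intro o
    have h := cntB_lt_k P M hk hbal (rfl : M o = M o)
    show cntB P M (M o) o + 1 ≤ k
    omega
  have hrnkp : ∀ (j : Fin n) (i : ℕ), 1 ≤ i → i ≤ k → rnkB (p j i) = i := by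
    intro j i h1 h2
    rw [hrnkB]
    simp only []
    rw [hpown j i h1 h2, hpcnt j i h1 h2]
    omega
  have hrepr : ∀ o : ι, p (M o) (rnkB o) = o := by
    intro o
    refine cntB_inj P M (hpown (M o) (rnkB o) (hrnk1 o) (hrnkk o)) rfl ?_
    rw [hpcnt (M o) (rnkB o) (hrnk1 o) (hrnkk o)]
    show cntB P M (M o) o + 1 - 1 = cntB P M (M o) o
    omega
  have hpinjown : ∀ (j j' : Fin n) (i i' : ℕ), 1 ≤ i → i ≤ k → 1 ≤ i' → i' ≤ k →
      p j i = p j' i' → j = j' := by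
    intro j j' i i' h1 h2 h3 h4 heq
    have := congrArg M heq
    rwa [hpown j i h1 h2, hpown j' i' h3 h4] at this
  -- remaining items: those of rank > i, plus round-i items of agents in A
  set Rem : ℕ → Finset (Fin n) → Finset ι := fun i A =>
    Finset.univ.filter (fun o => i < rnkB o) ∪ A.image (fun j => p j i) with hRem
  have hRemmem : ∀ (i : ℕ) (A : Finset (Fin n)) (o : ι),
      o ∈ Rem i A ↔ (i < rnkB o ∨ ∃ j ∈ A, o = p j i) := by
    intro i A o
    rw [hRem]
    simp only [Finset.mem_union, Finset.mem_filter, Finset.mem_univ, true_and, Finset.mem_image]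
    constructor
    · rintro (h | ⟨j, hj, h⟩)
      · exact Or.inl h
      · exact Or.inr ⟨j, hj, h.symm⟩
    · rintro (h | ⟨j, hj, h⟩)
      · exact Or.inl h
      · exact Or.inr ⟨j, hj, h.symm⟩
  have herase : ∀ (i : ℕ) (A : Finset (Fin n)) (j : Fin n), 1 ≤ i → i ≤ k → j ∈ A →
      (Rem i A).erase (p j i) = Rem i (A.erase j) := by
    intro i A j h1 h2 hj
    ext o
    rw [Finset.mem_erase, hRemmem, hRemmem]
    constructor
    · rintro ⟨hne, h | ⟨j', hj', rfl⟩⟩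
      · exact Or.inl h
      · refine Or.inr ⟨j', Finset.mem_erase.2 ⟨?_, hj'⟩, rfl⟩
        intro hcon
        exact hne (by rw [hcon])
    · rintro (h | ⟨j', hj', rfl⟩)
      · refine ⟨?_, Or.inl h⟩
        intro hcon
        rw [hcon, hrnkp j i h1 h2] at h
        omega
      · rw [Finset.mem_erase] at hj'
        refine ⟨?_, Or.inr ⟨j', hj'.2, rfl⟩⟩
        intro hcon
        exact hj'.1 (hpinjown j' j i i h1 h2 h1 h2 hcon)
  -- the favorite of the next agent is her round-i item
  have hfavRem : ∀ (i : ℕ) (A : Finset (Fin n)) (j : Fin n), 1 ≤ i → i ≤ k → j ∈ A →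
      (∀ j' ∈ A, j' ≠ j → (P j).lt (p j' i) (p j i)) →
      ∀ (hne : (Rem i A).Nonempty), favorite (P j) (Rem i A) hne = p j i := by
    intro i A j h1 h2 hj hbest hne
    refine favorite_eq hne ((hRemmem i A _).2 (Or.inr ⟨j, hj, rfl⟩)) ?_
    intro o ho
    rw [hRemmem] at ho
    rcases ho with h | ⟨j', hj', rfl⟩
    · have := hc3 i (rnkB o) h1 h (hrnkk o) j (M o)
      rw [hrepr o] at this
      exact Ple_of_lt this
    · by_cases hjj : j' = j
      · rw [hjj]; exact Ple_refl _ _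
      · exact Ple_of_lt (hbest j' hj' hjj)
  -- the round orders
  have hord := exists_round_order P M hPO p hpown
  classical
  set σf : ℕ → List (Fin n) := fun s =>
    if h : 1 ≤ s ∧ s ≤ k then (hord s h.1 h.2 Finset.univ).choose else [] with hσf
  have hσfspec : ∀ s : ℕ, 1 ≤ s → s ≤ k → (σf s).toFinset = Finset.univ ∧
      List.Pairwise (fun j j' => (P j).lt (p j' s) (p j s)) (σf s) := by
    intro s h1 h2
    rw [hσf]
    simp only [dif_pos (And.intro h1 h2)]
    exact (hord s h1 h2 Finset.univ).choose_spec
  have hpwnodup : ∀ (i : ℕ) (τ : List (Fin n)), 1 ≤ i → i ≤ k →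
      List.Pairwise (fun j j' => (P j).lt (p j' i) (p j i)) τ → τ.Nodup := by
    intro i τ h1 h2 hpw
    refine hpw.imp ?_
    intro a b hab hcon
    rw [hcon] at hab
    exact Plt_irrefl (P b) _ hab
  have hσflen : ∀ s : ℕ, 1 ≤ s → s ≤ k → (σf s).length = n := by
    intro s h1 h2
    obtain ⟨hfin, hpw⟩ := hσfspec s h1 h2
    have hnd := hpwnodup s _ h1 h2 hpw
    have := List.toFinset_card_of_nodup hnd
    rw [hfin, Finset.card_univ, Fintype.card_fin] at this
    omega
  -- main construction by induction on fuel
  have build : ∀ (fuel i : ℕ) (τ : List (Fin n)),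
      (k + 1 - i) * (n + 1) + τ.length ≤ fuel → 1 ≤ i → i ≤ k →
      List.Pairwise (fun j j' => (P j).lt (p j' i) (p j i)) τ →
      ∀ o ∈ Rem i τ.toFinset,
        (M o, o) ∈ seqAlloc P (τ ++ ((List.range' (i+1) (k - i)).map σf).flatten)
          (Rem i τ.toFinset) := by
    intro fuel
    induction fuel with
    | zero =>
      intro i τ hfuel h1 h2 _ o ho
      exfalso
      have h3 : 1 ≤ k + 1 - i := by omega
      have := Nat.mul_le_mul h3 (Nat.le_refl (n + 1))
      omega
    | succ fuel ih =>
      intro i τ hfuel h1 h2 hpw o ho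
      cases τ with
      | nil =>
        simp only [List.toFinset_nil] at ho ⊢
        by_cases hik : i = k
        · exfalso
          rw [hRemmem] at ho
          rcases ho with h | ⟨j, hj, _⟩
          · have := hrnkk o; omega
          · exact absurd hj (Finset.notMem_empty j)
        · have hik' : i < k := by omega
          have hRemEq : Rem i (∅ : Finset (Fin n)) = Rem (i+1) (σf (i+1)).toFinset := by
            have huniv : (σf (i+1)).toFinset = Finset.univ := (hσfspec (i+1) (by omega) (by omega)).1
            rw [huniv]
            ext o'
            rw [hRemmem, hRemmem]
            constructor
            · rintro (h | ⟨j, hj, _⟩)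
              · rcases Nat.lt_or_ge (i+1) (rnkB o') with h' | h'
                · exact Or.inl h'
                · have : rnkB o' = i + 1 := by omega
                  refine Or.inr ⟨M o', Finset.mem_univ _, ?_⟩
                  rw [← this, hrepr o']
              · exact absurd hj (Finset.notMem_empty j)
            · rintro (h | ⟨j, _, rfl⟩)
              · exact Or.inl (by omega)
              · exact Or.inl (by rw [hrnkp j (i+1) (by omega) (by omega)]; omega)
          have hlist : ([] : List (Fin n)) ++ ((List.range' (i+1) (k - i)).map σf).flatten
              = σf (i+1) ++ ((List.range' (i+2) (k - (i+1))).map σf).flatten := by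
            rw [List.nil_append]
            have hki : k - i = (k - (i+1)) + 1 := by omega
            rw [hki, List.range'_succ, List.map_cons, List.flatten_cons]
          rw [hRemEq] at ho ⊢
          rw [hlist]
          have harg : i + 2 = (i + 1) + 1 := by omega
          rw [harg]
          refine ih (i+1) (σf (i+1)) ?_ (by omega) (by omega)
            (hσfspec (i+1) (by omega) (by omega)).2 o ho
          rw [hσflen (i+1) (by omega) (by omega)]
          have he1 : k + 1 - i = (k + 1 - (i+1)) + 1 := by omega
          rw [he1] at hfuel
          rw [Nat.succ_mul] at hfuel
          omega
      | cons j τ' =>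
        have hjA : j ∈ (j :: τ').toFinset := by simp
        have hpwc := List.pairwise_cons.1 hpw
        have hbest : ∀ j' ∈ (j :: τ').toFinset, j' ≠ j → (P j).lt (p j' i) (p j i) := by
          intro j' hj' hne
          rw [List.toFinset_cons, Finset.mem_insert] at hj'
          rcases hj' with h | h
          · exact absurd h hne
          · exact hpwc.1 j' (List.mem_toFinset.1 h)
        have hne : (Rem i (j :: τ').toFinset).Nonempty :=
          ⟨p j i, (hRemmem _ _ _).2 (Or.inr ⟨j, hjA, rfl⟩)⟩
        have hfav := hfavRem i (j :: τ').toFinset j h1 h2 hjA hbest hne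
        have hjτ' : j ∉ τ' := by
          intro hcon
          exact Plt_irrefl (P j) (p j i) (hpwc.1 j hcon)
        have herase' : (Rem i (j :: τ').toFinset).erase (p j i) = Rem i τ'.toFinset := by
          rw [herase i _ j h1 h2 hjA, List.toFinset_cons,
            Finset.erase_insert (fun hcon => hjτ' (List.mem_toFinset.1 hcon))]
        rw [List.cons_append, seqAlloc_cons P j _ _ hne, hfav]
        by_cases hoj : o = p j i
        · subst hoj
          rw [hpown j i h1 h2]
          exact List.mem_cons_self
        · have ho' : o ∈ Rem i τ'.toFinset := by
            rw [← herase']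
            exact Finset.mem_erase.2 ⟨hoj, ho⟩
          rw [herase']
          refine List.mem_cons_of_mem _ (ih i τ' ?_ h1 h2 hpwc.2 o ho')
          simp only [List.length_cons] at hfuel
          omega
  -- assemble the policy
  set rounds : List (List (Fin n)) := (List.range' 1 k).map σf with hrounds
  refine ⟨rounds.flatten, ⟨rounds, ?_, ?_, rfl⟩, ?_⟩
  · rw [hrounds, List.length_map, List.length_range']
  · intro r hr
    rw [hrounds] at hr
    rcases List.mem_map.1 hr with ⟨s, hs, rfl⟩
    have hs' : 1 ≤ s ∧ s < 1 + k := List.mem_range'_1.1 hs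
    have h1 : 1 ≤ s := hs'.1
    have h2 : s ≤ k := by omega
    refine ⟨hσflen s h1 h2, ?_⟩
    intro a
    have hnd := hpwnodup s _ h1 h2 (hσfspec s h1 h2).2
    refine List.count_eq_one_of_mem hnd ?_
    rw [← List.mem_toFinset, (hσfspec s h1 h2).1]
    exact Finset.mem_univ a
  · intro o
    have h1k : (1:ℕ) ≤ k := hk
    have huniv1 : (σf 1).toFinset = Finset.univ := (hσfspec 1 le_rfl hk).1
    have hRem1 : Rem 1 (σf 1).toFinset = Finset.univ := by
      rw [huniv1]
      apply Finset.eq_univ_of_forall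
      intro o'
      rw [hRemmem]
      rcases Nat.lt_or_ge 1 (rnkB o') with h | h
      · exact Or.inl h
      · have : rnkB o' = 1 := by have := hrnk1 o'; omega
        refine Or.inr ⟨M o', Finset.mem_univ _, ?_⟩
        rw [← this, hrepr o']
      
    have hflatten : rounds.flatten = σf 1 ++ ((List.range' 2 (k - 1)).map σf).flatten := by
      rw [hrounds]
      have h2 : List.range' 1 k = 1 :: List.range' 2 (k - 1) := by
        conv_lhs => rw [show k = (k - 1) + 1 by omega]
        rw [List.range'_succ]
      rw [h2, List.map_cons, List.flatten_cons]
    have := build ((k + 1 - 1) * (n + 1) + n) 1 (σf 1)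
      (by rw [hσflen 1 le_rfl hk]) le_rfl hk (hσfspec 1 le_rfl hk).2 o
      (by rw [hRem1]; exact Finset.mem_univ o)
    rw [hRem1] at this
    rw [hflatten]
    exact this

end Backward
/-- An allocation `M` is the outcome of some recursively balanced policy if
and only if `M` is Pareto optimal, balanced, and satisfies Condition 3. -/
theorem possible_assignment_recursively_balanced
    {ι : Type} [Fintype ι] [DecidableEq ι] {n k : ℕ} (hn : 0 < n) (hk : 1 ≤ k)
    (hcard : Fintype.card ι = k * n)
    (P : Fin n → LinearOrder ι) (M : ι → Fin n) :
    (∃ π : List (Fin n), RecBalanced n k π ∧ IsOutcome P π M) ↔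
      ParetoOptimal P M ∧ BalancedAlloc k M ∧
        ∀ p : Fin n → ℕ → ι, IsRankingOf P k M p → Cond3 P k p := by
  constructor
  · rintro ⟨π, hrb, hout⟩
    exact forward_dir P M hn hk hcard π hrb hout
  · rintro ⟨hPO, hbal, hC3⟩
    exact backward_dir P M hn hk hcard hPO hbal hC3
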